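/- For all m ∈ ℕ and k ≥ 1, the higher-order q-Bernoulli numbers β^{(k)}_{i,q} = β^{(k)}_{i,q}(0) satisfy Σ_{i=0}^m C(m,i) (q−1)^i β^{(k)}_{i,q} = ( C(m+k,k) / binom(m+k,k)_q ) · ( k!/[k]_q! ). -/

import Mathlib

section AuxInversion

open Finset

lemma alt_sum {K : Type*} [Field K] [CharZero K] (s : ℕ) :
    ∑ t ∈ range (s + 1), (-1 : K) ^ t * (s.choose t : K) = if s = 0 then 1 else 0 := by
  have h := Int.alternating_sum_range_choose (n := s)
  have h2 := congrArg (fun z : ℤ => (z : K)) h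
  push_cast at h2
  simpa using h2

lemma binom_inversion {K : Type*} [Field K] [CharZero K] (f : ℕ → K) (n : ℕ) :
    ∑ i ∈ range (n + 1), (-1 : K) ^ i * (n.choose i : K) *
      ∑ j ∈ range (i + 1), (-1 : K) ^ j * (i.choose j : K) * f j = f n := by
  have hinner : ∀ i ∈ range (n + 1),
      (-1 : K) ^ i * (n.choose i : K) * ∑ j ∈ range (i + 1), (-1 : K) ^ j * (i.choose j : K) * f j
      = ∑ j ∈ range (n + 1), (-1 : K) ^ i * (n.choose i : K) *
          ((-1 : K) ^ j * (i.choose j : K) * f j) := by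
    intro i hi
    rw [mem_range] at hi
    rw [Finset.mul_sum]
    apply Finset.sum_subset (Finset.range_subset_range.2 (by omega))
    intro j _ hj
    rw [mem_range, not_lt] at hj
    have : i.choose j = 0 := Nat.choose_eq_zero_of_lt (by omega)
    simp [this]
  rw [Finset.sum_congr rfl hinner, Finset.sum_comm]
  have hS : ∀ j ∈ range (n + 1),
      ∑ i ∈ range (n + 1), (-1 : K) ^ i * (n.choose i : K) *
        ((-1 : K) ^ j * (i.choose j : K) * f j)
      = (-1 : K) ^ j * f j * ((-1 : K) ^ j * (n.choose j : K) *
          (if n - j = 0 then 1 else 0)) := by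
    intro j hj
    rw [mem_range] at hj
    have key : ∑ i ∈ range (n + 1), (-1 : K) ^ i * (n.choose i : K) * (i.choose j : K)
        = (-1 : K) ^ j * (n.choose j : K) * (if n - j = 0 then 1 else 0) := by
      rw [Finset.range_eq_Ico, ← Finset.sum_Ico_consecutive _ (Nat.zero_le j) (by omega)]
      have h1 : ∑ i ∈ Finset.Ico 0 j, (-1 : K) ^ i * (n.choose i : K) * (i.choose j : K) = 0 := by
        apply Finset.sum_eq_zero
        intro i hi
        rw [Finset.mem_Ico] at hi
        have : i.choose j = 0 := Nat.choose_eq_zero_of_lt (by omega)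
        simp [this]
      rw [h1, zero_add, Finset.sum_Ico_eq_sum_range]
      have h2 : n + 1 - j = (n - j) + 1 := by omega
      rw [h2]
      have h3 : ∀ t ∈ range (n - j + 1),
          (-1 : K) ^ (j + t) * (n.choose (j + t) : K) * ((j + t).choose j : K)
          = (-1 : K) ^ j * (n.choose j : K) * ((-1 : K) ^ t * ((n - j).choose t : K)) := by
        intro t ht
        rw [mem_range] at ht
        have hc : n.choose (j + t) * (j + t).choose j = n.choose j * (n - j).choose (j + t - j) :=
          Nat.choose_mul (by omega)
        have hjt : j + t - j = t := by omega
        rw [hjt] at hc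
        have hc' : ((n.choose (j + t) : K)) * ((j + t).choose j : K)
            = (n.choose j : K) * ((n - j).choose t : K) := by exact_mod_cast hc
        calc (-1 : K) ^ (j + t) * (n.choose (j + t) : K) * ((j + t).choose j : K)
            = (-1 : K) ^ j * (-1 : K) ^ t *
              ((n.choose (j + t) : K) * ((j + t).choose j : K)) := by rw [pow_add]; ring
          _ = (-1 : K) ^ j * (-1 : K) ^ t * ((n.choose j : K) * ((n - j).choose t : K)) := by
              rw [hc']
          _ = (-1 : K) ^ j * (n.choose j : K) * ((-1 : K) ^ t * ((n - j).choose t : K)) := by ring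
      rw [Finset.sum_congr rfl h3, ← Finset.mul_sum, alt_sum]
    calc ∑ i ∈ range (n + 1), (-1 : K) ^ i * (n.choose i : K) *
          ((-1 : K) ^ j * (i.choose j : K) * f j)
        = ((-1 : K) ^ j * f j) *
            ∑ i ∈ range (n + 1), (-1 : K) ^ i * (n.choose i : K) * (i.choose j : K) := by
          rw [Finset.mul_sum]; exact Finset.sum_congr rfl fun i _ => by ring
      _ = _ := by rw [key]
  rw [Finset.sum_congr rfl hS]
  rw [Finset.sum_eq_single n]
  · simp only [Nat.sub_self, if_pos rfl, Nat.choose_self, Nat.cast_one, mul_one]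
    have : (-1 : K) ^ n * (-1 : K) ^ n = 1 := by
      rw [← pow_add, ← two_mul, pow_mul]; norm_num
    calc (-1 : K) ^ n * f n * ((-1 : K) ^ n * 1) = ((-1 : K) ^ n * (-1 : K) ^ n) * f n := by ring
      _ = f n := by rw [this, one_mul]
  · intro j hj hjn
    rw [mem_range] at hj
    have : n - j ≠ 0 := by omega
    simp [this]
  · intro h; simp at h
end AuxInversion

/-- The q-analogue `[n]_q = (1 - q^n)/(1 - q)` of a natural number. -/
def qnum {K : Type*} [Field K] (q : K) (n : ℕ) : K := (1 - q ^ n) / (1 - q)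

/-- The q-factorial `[n]_q! = ∏_{j=1}^n [j]_q`. -/
def qfact {K : Type*} [Field K] (q : K) (n : ℕ) : K :=
  ∏ j ∈ Finset.range n, qnum q (j + 1)

/-- The Gaussian binomial coefficient, `0` for `k > n`. -/
def qbinom {K : Type*} [Field K] (q : K) (n k : ℕ) : K :=
  if k ≤ n then qfact q n / (qfact q k * qfact q (n - k)) else 0

/-- The q-Bernoulli number of order `k`, defined by the closed formula
`β^{(k)}_{i,q} = (1/(1-q)^i) Σ_{j=0}^i (-1)^j C(i,j) ∏_{l=1}^k (j+l)/[j+l]_q`. -/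
def qBernoulliNum {K : Type*} [Field K] (q : K) (k i : ℕ) : K :=
  (1 / (1 - q) ^ i) * ∑ j ∈ Finset.range (i + 1),
    (-1 : K) ^ j * (Nat.choose i j : K) *
      ∏ l ∈ Finset.Icc 1 k, ((j + l : ℕ) : K) / qnum q (j + l)

/-- The higher-order q-Bernoulli numbers satisfy
`Σ_{i=0}^m C(m,i)(q-1)^i β^{(k)}_{i,q} = (C(m+k,k)/binom(m+k,k)_q)(k!/[k]_q!)`. -/
theorem sum_choose_qBernoulliNum
    {K : Type*} [Field K] [CharZero K] (q : K) (hq0 : q ≠ 0)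
    (hq : ∀ n : ℕ, 1 ≤ n → q ^ n ≠ 1) (m k : ℕ) (hk : 1 ≤ k) :
    ∑ i ∈ Finset.range (m + 1), (Nat.choose m i : K) * (q - 1) ^ i * qBernoulliNum q k i =
      ((Nat.choose (m + k) k : K) / qbinom q (m + k) k) *
        ((Nat.factorial k : K) / qfact q k) := by
  have hq1 : (1 : K) - q ≠ 0 := by
    have := hq 1 le_rfl
    rw [pow_one] at this
    exact sub_ne_zero.2 fun h => this h.symm
  have hqnum : ∀ n : ℕ, 1 ≤ n → qnum q n ≠ 0 := by
    intro n hn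
    exact div_ne_zero (sub_ne_zero.2 fun h => hq n hn h.symm) hq1
  have hqfact : ∀ n : ℕ, qfact q n ≠ 0 := by
    intro n
    exact Finset.prod_ne_zero_iff.2 fun j _ => hqnum (j + 1) (by omega)
  set f : ℕ → K := fun j => ∏ l ∈ Finset.Icc 1 k, ((j + l : ℕ) : K) / qnum q (j + l) with hf
  -- Left side equals f m by binomial inversion
  have hL : ∑ i ∈ Finset.range (m + 1), (Nat.choose m i : K) * (q - 1) ^ i * qBernoulliNum q k i
      = f m := by
    rw [← binom_inversion f m]
    apply Finset.sum_congr rfl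
    intro i _
    unfold qBernoulliNum
    have hpow : (q - 1) ^ i * (1 / (1 - q) ^ i) = (-1 : K) ^ i := by
      have h1 : (q - 1) ^ i = (-1 : K) ^ i * (1 - q) ^ i := by
        rw [← neg_pow, neg_sub]
      rw [h1]
      field_simp
    calc (Nat.choose m i : K) * (q - 1) ^ i * ((1 / (1 - q) ^ i) *
          ∑ j ∈ Finset.range (i + 1), (-1 : K) ^ j * (i.choose j : K) * f j)
        = ((q - 1) ^ i * (1 / (1 - q) ^ i)) * ((Nat.choose m i : K) *
            ∑ j ∈ Finset.range (i + 1), (-1 : K) ^ j * (i.choose j : K) * f j) := by ring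
      _ = (-1 : K) ^ i * (Nat.choose m i : K) *
            ∑ j ∈ Finset.range (i + 1), (-1 : K) ^ j * (i.choose j : K) * f j := by
          rw [hpow]; ring
  rw [hL]
  -- now prove RHS = f m
  have hkm : k ≤ m + k := Nat.le_add_left k m
  have hsub : m + k - k = m := by omega
  have hsplit : qfact q (m + k) = qfact q m * ∏ l ∈ Finset.Icc 1 k, qnum q (m + l) := by
    unfold qfact
    rw [Finset.prod_range_add]
    congr 1
    rw [show Finset.Icc 1 k = Finset.Ico 1 (k + 1) by ext x; simp [Nat.lt_succ_iff],
      Finset.prod_Ico_eq_prod_range]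
    simp only [Nat.add_sub_cancel]
    apply Finset.prod_congr rfl
    intro i _
    congr 1
    omega
  have hfactsplit : ((m + k).factorial : K)
      = (m.factorial : K) * ∏ l ∈ Finset.Icc 1 k, ((m + l : ℕ) : K) := by
    have hn : (m + k).factorial = m.factorial * ∏ l ∈ Finset.Icc 1 k, (m + l) := by
      rw [← Finset.prod_range_add_one_eq_factorial, ← Finset.prod_range_add_one_eq_factorial,
        Finset.prod_range_add]
      congr 1
      rw [show Finset.Icc 1 k = Finset.Ico 1 (k + 1) by ext x; simp [Nat.lt_succ_iff],
        Finset.prod_Ico_eq_prod_range]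
      simp only [Nat.add_sub_cancel]
      apply Finset.prod_congr rfl
      intro i _
      omega
    rw [hn]
    push_cast
    ring
  have hchoose : ((m + k).choose k : K) * (k.factorial : K) * (m.factorial : K)
      = ((m + k).factorial : K) := by
    have hn : (m + k).choose k * k.factorial * m.factorial = (m + k).factorial := by
      rw [mul_right_comm]; exact Nat.add_choose_mul_factorial_mul_factorial m k
    exact_mod_cast hn
  have hmfact : (m.factorial : K) ≠ 0 := Nat.cast_ne_zero.2 m.factorial_ne_zero
  have hCA : ((m + k).choose k : K) * (k.factorial : K)
      = ∏ l ∈ Finset.Icc 1 k, ((m + l : ℕ) : K) := by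
    have h2 := hchoose.trans hfactsplit
    exact mul_right_cancel₀ hmfact (by rw [h2]; ring)
  have hB : (∏ l ∈ Finset.Icc 1 k, qnum q (m + l)) ≠ 0 := by
    apply Finset.prod_ne_zero_iff.2
    intro l hl
    rw [Finset.mem_Icc] at hl
    exact hqnum (m + l) (by omega)
  rw [hf]
  simp only
  rw [Finset.prod_div_distrib, ← hCA]
  unfold qbinom
  rw [if_pos hkm, hsub, hsplit]
  field_simp [hB, hqfact k, hqfact m]
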